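/- Let ℱ,𝒢 be forts of length ℓ and let {φ_λ: ℱ→𝒢}_{λ∈(0,1)} be a family of morphisms which are pairwise combinatorially equivalent, such that for every integer cell 𝒞∈C(ℱ) the map (λ,x)↦φ_λ(x) is continuous on (0,1)×𝒞. Then the map ψ: (0,1)×ℱ→(0,1)×𝒢 defined by ψ(λ,x)=(λ,φ_λ(x)) is a morphism of forts of length ℓ+1, where (0,1)×ℱ denotes the fort (0,1)⋉s with s assigning the fort ℱ to the unique integer cell of (0,1), and similarly for (0,1)×𝒢. -/

import Mathlib

open Set

namespace Forts

/-- An integer cell of length 1: a singleton `{k}` or an open interval `(k, k+1)`, `k : ℤ`. -/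
def Cell1 (S : Set ℝ) : Prop :=
  ∃ k : ℤ, S = {(k : ℝ)} ∨ S = Set.Ioo (k : ℝ) ((k : ℝ) + 1)

/-- An integer cell of length ℓ: a product of ℓ integer cells of length 1. -/
def Cell {ℓ : ℕ} (S : Set (Fin ℓ → ℝ)) : Prop :=
  ∃ c : Fin ℓ → Set ℝ, (∀ i, Cell1 (c i)) ∧ S = {x | ∀ i, x i ∈ c i}

/-- `cellsOf S` is the collection of integer cells contained in `S`. -/
def cellsOf {ℓ : ℕ} (S : Set (Fin ℓ → ℝ)) : Set (Set (Fin ℓ → ℝ)) :=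
  {C | Cell C ∧ C ⊆ S}

/-- Forts, defined inductively along the first coordinate: a fort of length 1 is an
interval `(0, n)` with `n ≥ 1`; given a fort `F1` of length 1 and an assignment `s` of a
fort of length ℓ to each integer cell of `F1`, the set `F1 ⋉ s = ⋃_{C ∈ C(F1)} C × s(C)`
is a fort of length `ℓ + 1`. -/
inductive Fort : (ℓ : ℕ) → Set (Fin ℓ → ℝ) → Prop
  | base (n : ℕ) (hn : 0 < n) : Fort 1 {x : Fin 1 → ℝ | x 0 ∈ Set.Ioo (0 : ℝ) (n : ℝ)}
  | step {ℓ : ℕ} (F1 : Set (Fin 1 → ℝ)) (s : Set (Fin 1 → ℝ) → Set (Fin ℓ → ℝ))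
      (hF1 : Fort 1 F1) (hs : ∀ C ∈ cellsOf F1, Fort ℓ (s C)) :
      Fort (ℓ + 1)
        {x : Fin (ℓ + 1) → ℝ | ∃ C ∈ cellsOf F1, (fun _ : Fin 1 => x 0) ∈ C ∧ Fin.tail x ∈ s C}

/-- A map between subsets of ℝ^ℓ is precellular if each coordinate function depends only on
the first `i` coordinates and is strictly increasing in the `i`-th coordinate. -/
def Precellular {ℓ : ℕ} (X : Set (Fin ℓ → ℝ)) (f : (Fin ℓ → ℝ) → (Fin ℓ → ℝ)) : Prop :=
  (∀ i : Fin ℓ, ∀ x ∈ X, ∀ y ∈ X, (∀ j : Fin ℓ, j ≤ i → x j = y j) → f x i = f y i) ∧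
  (∀ i : Fin ℓ, ∀ x ∈ X, ∀ y ∈ X, (∀ j : Fin ℓ, j < i → x j = y j) → x i < y i → f x i < f y i)

/-- A morphism of forts: surjective, precellular, maps integer cells into integer cells, and
is continuous on each integer cell. -/
def Morphism {ℓ : ℕ} (F G : Set (Fin ℓ → ℝ)) (φ : (Fin ℓ → ℝ) → (Fin ℓ → ℝ)) : Prop :=
  φ '' F = G ∧ Precellular F φ ∧
    ∀ C ∈ cellsOf F, (∃ C₂ ∈ cellsOf G, φ '' C ⊆ C₂) ∧ ContinuousOn φ C

/-- Two morphisms are combinatorially equivalent if they map each integer cell of the source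
into the same integer cell of the target. -/
def CombEquiv {ℓ : ℕ} (F G : Set (Fin ℓ → ℝ)) (φ ψ : (Fin ℓ → ℝ) → (Fin ℓ → ℝ)) : Prop :=
  ∀ C ∈ cellsOf F, ∃ C₂ ∈ cellsOf G, φ '' C ⊆ C₂ ∧ ψ '' C ⊆ C₂

/-- Projection to the first `i` coordinates. -/
def proj {ℓ : ℕ} (i : ℕ) (h : i ≤ ℓ) (x : Fin ℓ → ℝ) : Fin i → ℝ :=
  fun j => x (Fin.castLE h j)

/-- The last `ℓ - i` coordinates. -/
def tailpart {ℓ i : ℕ} (h : i ≤ ℓ) (x : Fin ℓ → ℝ) : Fin (ℓ - i) → ℝ :=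
  fun j => x ⟨i + (j : ℕ), by have := j.2; omega⟩

/-- Glue a prefix of length `i` with a suffix of length `ℓ - i`. -/
def glue {ℓ i : ℕ} (h : i ≤ ℓ) (x : Fin i → ℝ) (y : Fin (ℓ - i) → ℝ) : Fin ℓ → ℝ :=
  fun j => if hj : (j : ℕ) < i then x ⟨(j : ℕ), hj⟩
    else y ⟨(j : ℕ) - i, by have := j.2; omega⟩

/-- The fiber `X_x = {y : (x, y) ∈ X}` of `X ⊆ ℝ^ℓ` over `x ∈ ℝ^i`. -/
def fiber {ℓ i : ℕ} (h : i ≤ ℓ) (X : Set (Fin ℓ → ℝ)) (x : Fin i → ℝ) :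
    Set (Fin (ℓ - i) → ℝ) :=
  {y | glue h x y ∈ X}

end Forts

namespace Forts

lemma cell1_nonempty {A : Set ℝ} (h : Cell1 A) : A.Nonempty := by
  obtain ⟨k, h | h⟩ := h
  · exact ⟨k, h ▸ rfl⟩
  · exact ⟨k + 1 / 2, by rw [h]; constructor <;> norm_num⟩

lemma cell1_eq_of_mem {A B : Set ℝ} (hA : Cell1 A) (hB : Cell1 B) {t : ℝ}
    (htA : t ∈ A) (htB : t ∈ B) : A = B := by
  obtain ⟨k, hk | hk⟩ := hA <;> obtain ⟨m, hm | hm⟩ := hB <;> subst hk <;> subst hm <;>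
      simp only [Set.mem_singleton_iff, Set.mem_Ioo] at htA htB
  · simp [htA ▸ htB]
  · exfalso
    subst htA
    have h1 : m < k := by exact_mod_cast htB.1
    have h2 : k < m + 1 := by exact_mod_cast (by push_cast; exact htB.2 : (k : ℝ) < ((m + 1 : ℤ) : ℝ))
    omega
  · exfalso
    subst htB
    have h1 : k < m := by exact_mod_cast htA.1
    have h2 : m < k + 1 := by exact_mod_cast (by push_cast; exact htA.2 : (m : ℝ) < ((k + 1 : ℤ) : ℝ))
    omega
  · have h1 : k < m + 1 := by
      exact_mod_cast (by push_cast; linarith [htA.1, htB.2] : (k : ℝ) < ((m + 1 : ℤ) : ℝ))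
    have h2 : m < k + 1 := by
      exact_mod_cast (by push_cast; linarith [htB.1, htA.2] : (m : ℝ) < ((k + 1 : ℤ) : ℝ))
    have : k = m := by omega
    subst this
    rfl

lemma cell_nonempty {ℓ : ℕ} {A : Set (Fin ℓ → ℝ)} (h : Cell A) : A.Nonempty := by
  obtain ⟨c, hc, rfl⟩ := h
  choose y hy using fun i => cell1_nonempty (hc i)
  exact ⟨y, hy⟩

lemma cell_eq_of_mem {ℓ : ℕ} {A B : Set (Fin ℓ → ℝ)} (hA : Cell A) (hB : Cell B)
    {x : Fin ℓ → ℝ} (hxA : x ∈ A) (hxB : x ∈ B) : A = B := by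
  obtain ⟨c, hc, rfl⟩ := hA
  obtain ⟨d, hd, rfl⟩ := hB
  have : c = d := funext fun i => cell1_eq_of_mem (hc i) (hd i) (hxA i) (hxB i)
  rw [this]

/-- A definable-family version: a family `{φ_λ}_{λ ∈ (0,1)}` of pairwise combinatorially
equivalent morphisms `ℱ → 𝒢`, jointly continuous in `(λ, x)` on `(0,1) × 𝒞` for each integer
cell `𝒞` of `ℱ`, yields a morphism `(0,1) × ℱ → (0,1) × 𝒢`, `(λ, x) ↦ (λ, φ_λ(x))`. -/
theorem family_of_combEquiv_morphisms_is_morphism {ℓ : ℕ} (F G : Set (Fin ℓ → ℝ))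
    (hF : Fort ℓ F) (hG : Fort ℓ G)
    (φ : ℝ → (Fin ℓ → ℝ) → (Fin ℓ → ℝ))
    (hmor : ∀ l ∈ Set.Ioo (0 : ℝ) 1, Morphism F G (φ l))
    (hce : ∀ l ∈ Set.Ioo (0 : ℝ) 1, ∀ m ∈ Set.Ioo (0 : ℝ) 1, CombEquiv F G (φ l) (φ m))
    (hcont : ∀ C ∈ cellsOf F,
      ContinuousOn (fun p : ℝ × (Fin ℓ → ℝ) => φ p.1 p.2) (Set.Ioo (0 : ℝ) 1 ×ˢ C)) :
    Morphism {x : Fin (ℓ + 1) → ℝ | x 0 ∈ Set.Ioo (0 : ℝ) 1 ∧ Fin.tail x ∈ F}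
      {x : Fin (ℓ + 1) → ℝ | x 0 ∈ Set.Ioo (0 : ℝ) 1 ∧ Fin.tail x ∈ G}
      (fun x => Fin.cons (x 0) (φ (x 0) (Fin.tail x))) := by
  have h2 : (1 / 2 : ℝ) ∈ Set.Ioo (0 : ℝ) 1 := by norm_num
  refine ⟨?_, ⟨?_, ?_⟩, ?_⟩
  · -- image equality
    apply Set.Subset.antisymm
    · rintro y ⟨x, ⟨hx0, hxt⟩, rfl⟩
      refine ⟨by simpa using hx0, ?_⟩
      have : φ (x 0) (Fin.tail x) ∈ G := by
        rw [← (hmor (x 0) hx0).1]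
        exact ⟨Fin.tail x, hxt, rfl⟩
      simpa [Fin.tail_cons] using this
    · rintro y ⟨hy0, hyt⟩
      have : Fin.tail y ∈ φ (y 0) '' F := by rw [(hmor (y 0) hy0).1]; exact hyt
      obtain ⟨z, hz, hzeq⟩ := this
      refine ⟨Fin.cons (y 0) z, ⟨by simpa using hy0, by simpa [Fin.tail_cons] using hz⟩, ?_⟩
      simp only [Fin.cons_zero, Fin.tail_cons, hzeq, Fin.cons_self_tail]
  · -- depends only on first coordinates
    intro i x hx y hy hxy
    induction i using Fin.cases with
    | zero => simpa using hxy 0 le_rfl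
    | succ j =>
      have h00 : x 0 = y 0 := hxy 0 (Fin.zero_le _)
      simp only [Fin.cons_succ]
      rw [← h00]
      exact (hmor (x 0) hx.1).2.1.1 j (Fin.tail x) hx.2 (Fin.tail y) hy.2
        (fun k hk => hxy k.succ (by rwa [Fin.succ_le_succ_iff]))
  · -- strictly increasing
    intro i x hx y hy hxy hlt
    induction i using Fin.cases with
    | zero => simpa using hlt
    | succ j =>
      have h00 : x 0 = y 0 := hxy 0 (Fin.succ_pos j)
      simp only [Fin.cons_succ] at hlt ⊢
      rw [← h00]
      exact (hmor (x 0) hx.1).2.1.2 j (Fin.tail x) hx.2 (Fin.tail y) hy.2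
        (fun k hk => hxy k.succ (by rwa [Fin.succ_lt_succ_iff])) hlt
  · -- cells
    rintro C ⟨⟨c, hc1, rfl⟩, hCF⟩
    set C' : Set (Fin ℓ → ℝ) := {y | ∀ j, y j ∈ c j.succ} with hC'def
    have hC'cell : Cell C' := ⟨fun j => c j.succ, fun j => hc1 j.succ, rfl⟩
    obtain ⟨y₀, hy₀⟩ := cell_nonempty hC'cell
    have hcons : ∀ t ∈ c 0, ∀ y ∈ C', Fin.cons t y ∈ {x : Fin (ℓ + 1) → ℝ | ∀ i, x i ∈ c i} := by
      intro t ht y hy i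
      induction i using Fin.cases with
      | zero => simpa using ht
      | succ j => simpa using hy j
    have hc0 : c 0 ⊆ Set.Ioo (0 : ℝ) 1 := by
      intro t ht
      have := hCF (hcons t ht y₀ hy₀)
      simpa using this.1
    have hC'F : C' ⊆ F := by
      intro y hy
      obtain ⟨t, ht⟩ := cell1_nonempty (hc1 0)
      have := hCF (hcons t ht y hy)
      simpa [Fin.tail_cons] using this.2
    have hC'cells : C' ∈ cellsOf F := ⟨hC'cell, hC'F⟩
    obtain ⟨D, hD, hφD⟩ := ((hmor (1 / 2) h2).2.2 C' hC'cells).1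
    have hall : ∀ l ∈ Set.Ioo (0 : ℝ) 1, φ l '' C' ⊆ D := by
      intro l hl
      obtain ⟨E, hE, hlE, hhE⟩ := hce l hl (1 / 2) h2 C' hC'cells
      have : E = D := cell_eq_of_mem hE.1 hD.1 (hhE ⟨y₀, hy₀, rfl⟩) (hφD ⟨y₀, hy₀, rfl⟩)
      exact this ▸ hlE
    obtain ⟨⟨e, he1, hDe⟩, hDG⟩ := hD
    set d : Fin (ℓ + 1) → Set ℝ := Fin.cons (c 0) e with hd
    constructor
    · refine ⟨{x : Fin (ℓ + 1) → ℝ | ∀ i, x i ∈ d i}, ⟨⟨d, ?_, rfl⟩, ?_⟩, ?_⟩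
      · intro i
        induction i using Fin.cases with
        | zero => simpa [hd] using hc1 0
        | succ j => simpa [hd] using he1 j
      · intro x hx
        refine ⟨hc0 (by simpa [hd] using hx 0), ?_⟩
        apply hDG
        rw [hDe]
        intro j
        exact (by simpa [hd] using hx j.succ : x j.succ ∈ e j)
      · rintro y ⟨x, hx, rfl⟩
        intro i
        induction i using Fin.cases with
        | zero => simpa [hd] using hx 0
        | succ j =>
          have hxtail : Fin.tail x ∈ C' := fun j => hx j.succ
          have : φ (x 0) (Fin.tail x) ∈ D := hall (x 0) (hc0 (hx 0)) ⟨Fin.tail x, hxtail, rfl⟩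
          rw [hDe] at this
          simpa [hd] using this j
    · -- continuity
      have hg : Continuous (fun x : Fin (ℓ + 1) → ℝ => ((x 0 : ℝ), Fin.tail x)) :=
        (continuous_apply 0).prodMk (continuous_pi fun j => continuous_apply j.succ)
      have hmaps : ∀ x ∈ {x : Fin (ℓ + 1) → ℝ | ∀ i, x i ∈ c i},
          ((x 0 : ℝ), Fin.tail x) ∈ Set.Ioo (0 : ℝ) 1 ×ˢ C' := by
        intro x hx
        exact ⟨hc0 (hx 0), fun j => hx j.succ⟩
      have hφcont : ContinuousOn (fun x : Fin (ℓ + 1) → ℝ => φ (x 0) (Fin.tail x))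
          {x : Fin (ℓ + 1) → ℝ | ∀ i, x i ∈ c i} :=
        (hcont C' hC'cells).comp hg.continuousOn hmaps
      rw [continuousOn_pi]
      intro i
      induction i using Fin.cases with
      | zero =>
        simpa using (continuous_apply (0 : Fin (ℓ + 1))).continuousOn
          (s := {x : Fin (ℓ + 1) → ℝ | ∀ i, x i ∈ c i})
      | succ j =>
        simp only [Fin.cons_succ]
        exact (continuous_apply j).comp_continuousOn hφcont

end Forts
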